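/- arXiv:2306.06508 — 4 statements merged into one kernel-verified Lean document; each statement's English description precedes it below -/
import Mathlib

section
/- (Theorem: client error bound) Suppose ĥ minimizes the empirical mixture risk ε̂_{α_i} over H, and h* minimizes the expected local risk ε_i over H. If (a) for all h ∈ H, |ε̂_{α_i}(h) − ε_{α_i}(h)| ≤ φ, and (b) for all h ∈ H and all j, |ε_i(h) − ε_j(h)| ≤ D(i,j), then ε_i(ĥ) ≤ ε_i(h*) + 2φ + 2∑_{j≠i} α_{ij} D(i,j). -/
/-- Client error bound: ε_i(ĥ) ≤ ε_i(h*) + 2φ + 2∑_{j≠i} α_{ij} D(i,j). -/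
theorem client_error_bound {H : Type*} [Nonempty H] (N : ℕ)
    (ε εhat : Fin N → H → ℝ) (i : Fin N)
    (α : Fin N → ℝ) (hα0 : ∀ j, 0 ≤ α j) (hα1 : ∑ j, α j = 1)
    (φ : ℝ) (hφ0 : 0 ≤ φ)
    (hgen : ∀ h : H, |(∑ j, α j * εhat j h) - (∑ j, α j * ε j h)| ≤ φ)
    (D : Fin N → Fin N → ℝ) (hD0 : ∀ j k, 0 ≤ D j k)
    (hD : ∀ (h : H) (j : Fin N), |ε i h - ε j h| ≤ D i j)
    (hhat hstar : H)
    (hERM : ∀ h : H, ∑ j, α j * εhat j hhat ≤ ∑ j, α j * εhat j h)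
    (hOPT : ∀ h : H, ε i hstar ≤ ε i h) :
    ε i hhat ≤ ε i hstar + 2 * φ + 2 * ∑ j ∈ Finset.univ.erase i, α j * D i j := by
  set S := ∑ j ∈ Finset.univ.erase i, α j * D i j with hS
  have key : ∀ h : H, |ε i h - ∑ j, α j * ε j h| ≤ S := by
    intro h
    have h1 : ε i h - ∑ j, α j * ε j h = ∑ j, α j * (ε i h - ε j h) := by
      simp only [mul_sub, Finset.sum_sub_distrib, ← Finset.sum_mul, hα1, one_mul]
    rw [h1]
    calc |∑ j, α j * (ε i h - ε j h)| ≤ ∑ j, |α j * (ε i h - ε j h)| :=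
          Finset.abs_sum_le_sum_abs _ _
      _ = ∑ j, α j * |ε i h - ε j h| := by
          refine Finset.sum_congr rfl fun j _ => ?_
          rw [abs_mul, abs_of_nonneg (hα0 j)]
      _ = ∑ j ∈ Finset.univ.erase i, α j * |ε i h - ε j h| := by
          rw [← Finset.sum_erase]
          simp
      _ ≤ S := Finset.sum_le_sum fun j hj => by
          exact mul_le_mul_of_nonneg_left (hD h j) (hα0 j)
  have g1 := hgen hhat
  have g2 := hgen hstar
  have k1 := key hhat
  have k2 := key hstar
  have e1 := hERM hstar
  rw [abs_le] at g1 g2 k1 k2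
  linarith [g1.1, g1.2, g2.1, g2.2, k1.1, k1.2, k2.1, k2.2]
end

section
/- Let the coalition error bound be B(C) = ε* + 2μ/√(m_C) + (2/m_C)·∑_{j∈C, j≠i} m_j·D(i,j), where m_C = ∑_{j∈C} m_j. Fix a client i with m_i samples and threshold D_thr = μ√m/(2 m_i), where m ≥ m_C for any coalition C containing i. If coalition C containing i includes at least one client j with D(i,j) > D_thr, then the subcoalition C⁻ = {k ∈ C : D(i,k) ≤ D_thr} ∪ {i} satisfies B(C⁻) < B(C). In particular, any coalition minimizing B contains no client with distance strictly greater than D_thr from client i. -/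
open Finset

lemma key_ineq (μ w u v mi T a b : ℝ) (hμ : 0 < μ) (hv : 0 < v) (huv : v < u)
    (huw : u ≤ w) (hmi : 0 < mi) (hT : T = μ * w / (2 * mi))
    (ha : b + T * (u ^ 2 - v ^ 2) < a) (hb : b ≤ T * (v ^ 2 - mi)) :
    2 * μ / v + 2 * b / v ^ 2 < 2 * μ / u + 2 * a / u ^ 2 := by
  have hu : 0 < u := lt_trans hv huv
  have hw : 0 < w := lt_of_lt_of_le hu huw
  have hTpos : 0 < T := by rw [hT]; positivity
  have hTmi : T * mi = μ * w / 2 := by rw [hT]; field_simp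
  have h1 : μ * u ^ 2 * v + b * u ^ 2 < μ * u * v ^ 2 + a * v ^ 2 := by
    have hs : 0 < u ^ 2 - v ^ 2 := by nlinarith
    have step1 : (b + T * (u ^ 2 - v ^ 2)) * v ^ 2 < a * v ^ 2 :=
      mul_lt_mul_of_pos_right ha (by positivity)
    have step2 : T * mi ≤ T * v ^ 2 - b := by nlinarith
    have step3 : (u ^ 2 - v ^ 2) * (T * mi) ≤ (u ^ 2 - v ^ 2) * (T * v ^ 2 - b) :=
      mul_le_mul_of_nonneg_left step2 (le_of_lt hs)
    have id1 : (b + T * (u ^ 2 - v ^ 2)) * v ^ 2 - b * u ^ 2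
        = (u ^ 2 - v ^ 2) * (T * v ^ 2 - b) := by ring
    have h2 : (u ^ 2 - v ^ 2) * (μ * w / 2) < a * v ^ 2 - b * u ^ 2 := by
      have : (u ^ 2 - v ^ 2) * (T * mi) = (u ^ 2 - v ^ 2) * (μ * w / 2) := by rw [hTmi]
      linarith
    have h3 : μ * u ^ 2 * v - μ * u * v ^ 2 ≤ (u ^ 2 - v ^ 2) * (μ * w / 2) := by
      nlinarith [mul_pos hu hv, mul_nonneg (mul_nonneg (le_of_lt hμ) (le_of_lt hv)) (sq_nonneg (u - v)),
        mul_nonneg (le_of_lt hμ) (mul_nonneg (sub_nonneg.mpr (le_of_lt huv)) (sub_nonneg.mpr huw))]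
    linarith
  have e1 : 2 * μ / v + 2 * b / v ^ 2 = (2 * μ * v + 2 * b) / v ^ 2 := by
    field_simp
  have e2 : 2 * μ / u + 2 * a / u ^ 2 = (2 * μ * u + 2 * a) / u ^ 2 := by
    field_simp
  rw [e1, e2, div_lt_div_iff₀ (by positivity) (by positivity)]
  nlinarith [h1]

/-- Picky clients: dropping all clients beyond the distance threshold strictly decreases
    the coalition error bound; hence any minimizing coalition has no client farther than
    D_thr from client i. -/
theorem drop_far_clients_decreases_bound (N : ℕ) (m : Fin N → ℝ) (hm : ∀ j, 0 < m j)
    (D : Fin N → Fin N → ℝ) (hD0 : ∀ i j, 0 ≤ D i j) (hDii : ∀ i, D i i = 0)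
    (μ : ℝ) (hμ : 0 < μ) (εstar : ℝ) (i : Fin N)
    (B : Finset (Fin N) → ℝ)
    (hB : ∀ C : Finset (Fin N), B C =
      εstar + 2 * μ / Real.sqrt (∑ j ∈ C, m j) +
        2 * ∑ j ∈ C.erase i, (m j / ∑ k ∈ C, m k) * D i j)
    (Dthr : ℝ) (hDthr : Dthr = μ * Real.sqrt (∑ j, m j) / (2 * m i)) :
    (∀ C : Finset (Fin N), i ∈ C → (∃ j ∈ C, D i j > Dthr) →
      B (C.filter (fun k => D i k ≤ Dthr) ∪ {i}) < B C) ∧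
    (∀ C : Finset (Fin N), i ∈ C →
      (∀ C' : Finset (Fin N), i ∈ C' → B C ≤ B C') →
      ∀ j ∈ C, D i j ≤ Dthr) := by
  have hMpos : 0 < ∑ j, m j := Finset.sum_pos (fun k _ => hm k) ⟨i, Finset.mem_univ i⟩
  have hsqrtM : 0 < Real.sqrt (∑ j, m j) := Real.sqrt_pos.mpr hMpos
  have hDthr_pos : 0 < Dthr := by rw [hDthr]; exact div_pos (mul_pos hμ hsqrtM) (mul_pos two_pos (hm i))
  have main : ∀ C : Finset (Fin N), i ∈ C → (∃ j ∈ C, D i j > Dthr) →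
      B (C.filter (fun k => D i k ≤ Dthr) ∪ {i}) < B C := by
    rintro C hiC ⟨j, hjC, hjfar⟩
    set Cm := C.filter (fun k => D i k ≤ Dthr) with hCmdef
    set F := C.filter (fun k => ¬ D i k ≤ Dthr) with hFdef
    have hiCm : i ∈ Cm := Finset.mem_filter.mpr ⟨hiC, by rw [hDii]; exact le_of_lt hDthr_pos⟩
    have hUnion : Cm ∪ {i} = Cm := Finset.union_eq_left.mpr (Finset.singleton_subset_iff.mpr hiCm)
    rw [hUnion]
    have hjF : j ∈ F := Finset.mem_filter.mpr ⟨hjC, not_le.mpr hjfar⟩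
    -- masses
    have hst : ∑ k ∈ Cm, m k + ∑ k ∈ F, m k = ∑ k ∈ C, m k :=
      Finset.sum_filter_add_sum_filter_not C _ m
    have ht : 0 < ∑ k ∈ Cm, m k := Finset.sum_pos (fun k _ => hm k) ⟨i, hiCm⟩
    have hsf : 0 < ∑ k ∈ F, m k := Finset.sum_pos (fun k _ => hm k) ⟨j, hjF⟩
    have hs : 0 < ∑ k ∈ C, m k := by linarith
    have hsM : ∑ k ∈ C, m k ≤ ∑ k, m k :=
      Finset.sum_le_sum_of_subset_of_nonneg (Finset.subset_univ C) (fun k _ _ => le_of_lt (hm k))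
    -- erase split
    have herase : ∑ k ∈ C.erase i, m k * D i k
        = ∑ k ∈ Cm.erase i, m k * D i k + ∑ k ∈ F, m k * D i k := by
      rw [← Finset.sum_filter_add_sum_filter_not (C.erase i) (fun k => D i k ≤ Dthr)]
      congr 1
      · apply Finset.sum_congr _ (fun _ _ => rfl)
        ext k
        simp only [Finset.mem_filter, Finset.mem_erase, hCmdef]
        tauto
      · apply Finset.sum_congr _ (fun _ _ => rfl)
        ext k
        simp only [Finset.mem_filter, Finset.mem_erase, hFdef]
        constructor
        · tauto
        · rintro ⟨hkC, hk⟩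
          refine ⟨⟨fun he => hk ?_, hkC⟩, hk⟩
          rw [he, hDii]; exact le_of_lt hDthr_pos
    -- far clients contribute strictly more than Dthr each
    have haf : Dthr * (∑ k ∈ F, m k) < ∑ k ∈ F, m k * D i k := by
      rw [Finset.mul_sum]
      apply Finset.sum_lt_sum_of_nonempty ⟨j, hjF⟩
      intro k hk
      have hk' : Dthr < D i k := not_le.mp (Finset.mem_filter.mp hk).2
      rw [mul_comm]
      exact mul_lt_mul_of_pos_left hk' (hm k)
    -- near clients contribute at most Dthr each
    have hsum_erase : ∑ k ∈ Cm.erase i, m k = (∑ k ∈ Cm, m k) - m i :=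
      Finset.sum_erase_eq_sub hiCm
    have hb : ∑ k ∈ Cm.erase i, m k * D i k ≤ Dthr * ((∑ k ∈ Cm, m k) - m i) := by
      rw [← hsum_erase, Finset.mul_sum]
      apply Finset.sum_le_sum
      intro k hk
      have hk' : D i k ≤ Dthr := (Finset.mem_filter.mp (Finset.mem_of_mem_erase hk)).2
      have := mul_le_mul_of_nonneg_left hk' (le_of_lt (hm k))
      linarith
    -- rewrite B values
    have hBform : ∀ C' : Finset (Fin N), (0:ℝ) < ∑ k ∈ C', m k → B C' =
        εstar + 2 * μ / Real.sqrt (∑ k ∈ C', m k) +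
          2 * ((∑ k ∈ C'.erase i, m k * D i k) / ∑ k ∈ C', m k) := by
      intro C' hC'
      rw [hB C']
      congr 1
      rw [Finset.sum_div]
      exact congrArg (2 * ·) (Finset.sum_congr rfl (fun k _ => by ring))
    rw [hBform C hs, hBform Cm ht]
    -- apply key inequality
    set s := ∑ k ∈ C, m k
    set t := ∑ k ∈ Cm, m k
    have hts : t < s := by linarith
    have hu2 : (Real.sqrt s) ^ 2 = s := Real.sq_sqrt (le_of_lt hs)
    have hv2 : (Real.sqrt t) ^ 2 = t := Real.sq_sqrt (le_of_lt ht)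
    have hfin := key_ineq μ (Real.sqrt (∑ j, m j)) (Real.sqrt s) (Real.sqrt t) (m i) Dthr
      (∑ k ∈ C.erase i, m k * D i k) (∑ k ∈ Cm.erase i, m k * D i k)
      hμ (Real.sqrt_pos.mpr ht) (Real.sqrt_lt_sqrt (le_of_lt ht) hts)
      (Real.sqrt_le_sqrt hsM) (hm i) hDthr
      (by rw [hu2, hv2]; rw [herase]; nlinarith)
      (by rw [hv2]; exact hb)
    rw [hu2, hv2] at hfin
    have e1 : 2 * ((∑ k ∈ Cm.erase i, m k * D i k) / t)
        = 2 * (∑ k ∈ Cm.erase i, m k * D i k) / t := by ring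
    have e2 : 2 * ((∑ k ∈ C.erase i, m k * D i k) / s)
        = 2 * (∑ k ∈ C.erase i, m k * D i k) / s := by ring
    rw [e1, e2]
    linarith
  refine ⟨main, fun C hiC hmin j hjC => ?_⟩
  by_contra h
  have h1 := main C hiC ⟨j, hjC, not_le.mp h⟩
  have h2 := hmin (C.filter (fun k => D i k ≤ Dthr) ∪ {i})
    (Finset.mem_union_right _ (Finset.mem_singleton_self i))
  linarith
end

section
/- (Local training optimality) Under the coalition error bound B(C) = ε* + 2μ/√(m_C) + (2/m_C)∑_{j∈C−{i}} m_j D(i,j) with m_C = ∑_{j∈C} m_j, if D(i,j) > μ√m/(2 m_i) for every j ≠ i, then the singleton coalition {i} strictly minimizes B(C) over all coalitions C containing i. -/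
open Finset

/-- Local training optimality: if every other client is beyond the distance threshold,
    the singleton coalition {i} strictly minimizes the error bound. -/
theorem local_training_optimal (N : ℕ) (m : Fin N → ℝ) (hm : ∀ j, 0 < m j)
    (D : Fin N → Fin N → ℝ) (hD0 : ∀ i j, 0 ≤ D i j) (hDii : ∀ i, D i i = 0)
    (μ : ℝ) (hμ : 0 < μ) (εstar : ℝ) (i : Fin N)
    (B : Finset (Fin N) → ℝ)
    (hB : ∀ C : Finset (Fin N), B C =
      εstar + 2 * μ / Real.sqrt (∑ j ∈ C, m j) +
        2 * ∑ j ∈ C.erase i, (m j / ∑ k ∈ C, m k) * D i j)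
    (hfar : ∀ j : Fin N, j ≠ i → D i j > μ * Real.sqrt (∑ j, m j) / (2 * m i)) :
    ∀ C : Finset (Fin N), i ∈ C → C ≠ {i} → B {i} < B C := by
  intro C hiC hCne
  have ha : 0 < m i := hm i
  have hbpos : 0 < ∑ j ∈ C, m j := Finset.sum_pos (fun j _ => hm j) ⟨i, hiC⟩
  have hT : (0:ℝ) < ∑ j, m j := Finset.sum_pos (fun j _ => hm j) ⟨i, Finset.mem_univ i⟩
  set a := m i with hadef
  set b := ∑ j ∈ C, m j with hbdef
  set T := ∑ j, m j with hTdef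
  have hsplit : b = a + ∑ j ∈ C.erase i, m j := by
    rw [hbdef, ← Finset.add_sum_erase _ _ hiC]
  have hbT : b ≤ T :=
    Finset.sum_le_sum_of_subset_of_nonneg (Finset.subset_univ C) (fun j _ _ => (hm j).le)
  have hne : (C.erase i).Nonempty := by
    rw [Finset.erase_nonempty hiC]
    exact Finset.nontrivial_iff_ne_singleton hiC |>.2 hCne
  have herasepos : 0 < ∑ j ∈ C.erase i, m j :=
    Finset.sum_pos (fun j _ => hm j) hne
  have hab : a < b := by linarith
  -- strict lower bound on the distance sum
  have hS : ∑ j ∈ C.erase i, (m j / b) * (μ * Real.sqrt T / (2 * a))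
      < ∑ j ∈ C.erase i, (m j / b) * D i j := by
    apply Finset.sum_lt_sum_of_nonempty hne
    intro j hj
    exact mul_lt_mul_of_pos_left (hfar j (Finset.ne_of_mem_erase hj))
      (div_pos (hm j) hbpos)
  have hsum2 : ∑ j ∈ C.erase i, (m j / b) * (μ * Real.sqrt T / (2 * a))
      = ((b - a) / b) * (μ * Real.sqrt T / (2 * a)) := by
    rw [← Finset.sum_mul, ← Finset.sum_div]
    congr 2
    linarith
  -- key analytic inequality
  have key : 2 * μ / Real.sqrt a ≤ 2 * μ / Real.sqrt b
      + (b - a) * (μ * Real.sqrt T) / (a * b) := by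
    set s := Real.sqrt a with hsdef
    set t := Real.sqrt b with htdef
    set u := Real.sqrt T with hudef
    have hs : 0 < s := Real.sqrt_pos.2 ha
    have ht : 0 < t := Real.sqrt_pos.2 hbpos
    have hu : 0 < u := Real.sqrt_pos.2 hT
    have hs2 : s ^ 2 = a := Real.sq_sqrt ha.le
    have ht2 : t ^ 2 = b := Real.sq_sqrt hbpos.le
    have hst : s ≤ t := Real.sqrt_le_sqrt hab.le
    have htu : t ≤ u := Real.sqrt_le_sqrt hbT
    rw [div_add_div _ _ (ne_of_gt ht) (by positivity), div_le_div_iff₀ hs (by positivity),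
      ← hs2, ← ht2]
    nlinarith [mul_nonneg (mul_nonneg (mul_nonneg (mul_nonneg
        (mul_nonneg hμ.le hs.le) ht.le) (sub_nonneg.2 hst)) (add_pos hs ht).le)
        (sub_nonneg.2 htu),
      mul_nonneg (mul_nonneg (mul_nonneg hμ.le hs.le) (sq_nonneg t))
        (sq_nonneg (t - s))]
  have heq : 2 * (((b - a) / b) * (μ * Real.sqrt T / (2 * a)))
      = (b - a) * (μ * Real.sqrt T) / (a * b) := by
    field_simp
  rw [hB, hB]
  have hsb : ∑ j ∈ ({i} : Finset (Fin N)), m j = a := by simp [hadef]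
  have hse : ({i} : Finset (Fin N)).erase i = ∅ := by simp
  rw [hsb, hse]
  simp only [Finset.sum_empty, mul_zero, add_zero]
  have h1 : 2 * (((b - a) / b) * (μ * Real.sqrt T / (2 * a)))
      < 2 * ∑ j ∈ C.erase i, (m j / b) * D i j := by
    rw [← hsum2]; linarith
  calc εstar + 2 * μ / Real.sqrt a
      ≤ εstar + (2 * μ / Real.sqrt b + (b - a) * (μ * Real.sqrt T) / (a * b)) := by linarith
    _ = εstar + 2 * μ / Real.sqrt b + 2 * (((b - a) / b) * (μ * Real.sqrt T / (2 * a))) := by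
        rw [heq]; ring
    _ < εstar + 2 * μ / Real.sqrt b + 2 * ∑ j ∈ C.erase i, (m j / b) * D i j := by linarith
end

section
/- (Weighted sum comparison in subcoalition) With notation as in the coalition bound, if every j ∈ C⁻−{i} has D(i,j) ≤ D_thr and every j ∈ C⁺ has D(i,j) > D_thr, where C = C⁻ ∪ C⁺ disjointly, i ∈ C⁻, and C⁺ ≠ ∅, then ∑_{j∈C−{i}} (m_j/m_C) D(i,j) − ∑_{j∈C⁻−{i}} (m_j/m_{C⁻}) D(i,j) > (1/m_{C⁻} − 1/m_C)·m_i·D_thr. -/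
open Finset

/-- Weighted sum comparison in subcoalition:
    ∑_{j∈C−{i}} (mⱼ/m_C) D(i,j) − ∑_{j∈C⁻−{i}} (mⱼ/m_{C⁻}) D(i,j)
      > (1/m_{C⁻} − 1/m_C)·m_i·D_thr. -/
theorem weighted_sum_subcoalition (N : ℕ) (m : Fin N → ℝ) (hm : ∀ j, 0 < m j)
    (i : Fin N) (Dthr : ℝ) (hDthr : 0 < Dthr)
    (D : Fin N → Fin N → ℝ) (hD0 : ∀ j, 0 ≤ D i j)
    (Cminus Cplus : Finset (Fin N)) (hdisj : Disjoint Cminus Cplus)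
    (hi : i ∈ Cminus) (hplus : Cplus.Nonempty)
    (hnear : ∀ j ∈ Cminus.erase i, D i j ≤ Dthr)
    (hfar : ∀ j ∈ Cplus, D i j > Dthr) :
    (∑ j ∈ (Cminus ∪ Cplus).erase i, (m j / ∑ k ∈ Cminus ∪ Cplus, m k) * D i j) -
      (∑ j ∈ Cminus.erase i, (m j / ∑ k ∈ Cminus, m k) * D i j) >
        (1 / ∑ k ∈ Cminus, m k - 1 / ∑ k ∈ Cminus ∪ Cplus, m k) * m i * Dthr := by
  have hiB : i ∉ Cplus := fun h => (Finset.disjoint_left.mp hdisj hi) h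
  set a := ∑ k ∈ Cminus, m k with ha_def
  set b := ∑ k ∈ Cminus ∪ Cplus, m k with hb_def
  have ha : 0 < a := Finset.sum_pos (fun j _ => hm j) ⟨i, hi⟩
  have hb : 0 < b := Finset.sum_pos (fun j _ => hm j) ⟨i, Finset.mem_union_left _ hi⟩
  have hBpos : 0 < ∑ j ∈ Cplus, m j := Finset.sum_pos (fun j _ => hm j) hplus
  have hsB : b = a + ∑ j ∈ Cplus, m j := by
    rw [hb_def, Finset.sum_union hdisj]
  have hab : a ≤ b := by linarith
  have hsA : ∑ j ∈ Cminus.erase i, m j = a - m i := by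
    rw [ha_def, Finset.sum_erase_eq_sub hi]
  have herase : (Cminus ∪ Cplus).erase i = Cminus.erase i ∪ Cplus := by
    rw [Finset.erase_union_distrib, Finset.erase_eq_of_notMem hiB]
  have hdisj' : Disjoint (Cminus.erase i) Cplus :=
    hdisj.mono_left (Finset.erase_subset _ _)
  rw [herase, Finset.sum_union hdisj']
  have h1 : ∑ j ∈ Cplus, (m j / b) * D i j > ∑ j ∈ Cplus, (m j / b) * Dthr := by
    apply Finset.sum_lt_sum_of_nonempty hplus
    intro j hj
    exact mul_lt_mul_of_pos_left (hfar j hj) (div_pos (hm j) hb)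
  have h2 : ∑ j ∈ Cminus.erase i, ((m j / b) * D i j - (m j / a) * D i j)
      ≥ ∑ j ∈ Cminus.erase i, ((m j / b) * Dthr - (m j / a) * Dthr) := by
    apply Finset.sum_le_sum
    intro j hj
    have hc : m j / b - m j / a ≤ 0 := by
      have hle : m j / b ≤ m j / a :=
        div_le_div_of_nonneg_left (le_of_lt (hm j)) ha hab
      linarith
    have := mul_le_mul_of_nonpos_left (hnear j hj) hc
    nlinarith [this]
  have e1 : ∀ (s : Finset (Fin N)) (c : ℝ), ∑ j ∈ s, (m j / c) * Dthr
      = (∑ j ∈ s, m j) * Dthr / c := by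
    intro s c
    rw [Finset.sum_mul, Finset.sum_div]
    exact Finset.sum_congr rfl fun j _ => by ring
  have key : (∑ j ∈ Cplus, (m j / b) * Dthr)
      + ((∑ j ∈ Cminus.erase i, (m j / b) * Dthr)
        - (∑ j ∈ Cminus.erase i, (m j / a) * Dthr))
      = (1 / a - 1 / b) * m i * Dthr := by
    rw [e1, e1, e1, hsA]
    have hB : ∑ j ∈ Cplus, m j = b - a := by linarith
    rw [hB]
    field_simp
    ring
  have hsub : ∑ j ∈ Cminus.erase i, ((m j / b) * D i j - (m j / a) * D i j)
      = (∑ j ∈ Cminus.erase i, (m j / b) * D i j)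
        - ∑ j ∈ Cminus.erase i, (m j / a) * D i j := Finset.sum_sub_distrib _ _
  have hsub2 : ∑ j ∈ Cminus.erase i, ((m j / b) * Dthr - (m j / a) * Dthr)
      = (∑ j ∈ Cminus.erase i, (m j / b) * Dthr)
        - ∑ j ∈ Cminus.erase i, (m j / a) * Dthr := Finset.sum_sub_distrib _ _
  rw [hsub, hsub2] at h2
  linarith
end
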